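/- Let a_1,…,a_n, B, K be positive integers with n ≥ 2, K ≥ 2 and ∑ a_i = B·K, and set x = 2·B·K. Let the virtual network be a 2-tiered star with root r; for each i an element group A_i that is a star on a_i vertices (a group center with a_i − 1 leaf children) all of whose internal edges have demand 1, joined to r by a demand-0 edge; and K + B dummy leaves attached to r, each by an edge of demand x. Let the physical network be the uniform 2-tiered star consisting of a root R, K bin subtrees each consisting of a bin root adjacent to R with B leaf children, and B extra leaves adjacent to R, with every edge of cost 1 (so distances are unweighted tree distances). Set θ = (K + B)·x + 2·∑_{i=1}^{n}(a_i − 1). Then the indices {1,…,n} can be partitioned into K subsets each with ∑ a_i at most B if and only if there exists a bijection f from the virtual vertices to the physical vertices whose embedding cost ∑_{uv ∈ E(VN)} w(uv) · dist(f(u), f(v)) is at most θ. (This is the correctness of the reduction showing that wVNE of a 2-star virtual network on a uniform 2-star physical network is NP-complete.) -/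

import Mathlib

open Classical Finset

/-- Tree distance in the uniform 2-tiered star physical network of Statement 5:
the root `R` is `(0,0)`; a first-level vertex (a bin root, or an extra leaf of the
root) is `(k, 0)` with `k ≥ 1`; a bin leaf is `(k, b)` with `k, b ≥ 1`.  All edges
have cost `1`, so the distance is the unweighted tree distance. -/
def uniformTwoStarDist (u v : ℕ × ℕ) : ℕ :=
  if u = v then 0
  else if u.1 = v.1 ∧ u.1 ≠ 0 then (if u.2 = 0 ∨ v.2 = 0 then 1 else 2)
  else (if u.1 = 0 then 0 else if u.2 = 0 then 1 else 2) +
       (if v.1 = 0 then 0 else if v.2 = 0 then 1 else 2)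

lemma bp_dist_root_first (k : ℕ) (hk : 1 ≤ k) : uniformTwoStarDist (0,0) (k,0) = 1 := by
  unfold uniformTwoStarDist
  simp only [Prod.mk.injEq, eq_self_iff_true, true_and, and_true, ne_eq]
  split_ifs <;> omega

lemma bp_dist_leaf_leaf_same (k b b' : ℕ) (hk : 1 ≤ k) (hb : 1 ≤ b) (hb' : 1 ≤ b')
    (hne : b ≠ b') : uniformTwoStarDist (k,b) (k,b') = 2 := by
  unfold uniformTwoStarDist
  simp only [Prod.mk.injEq, eq_self_iff_true, true_and, and_true, ne_eq]
  split_ifs <;> omega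


lemma bp_dist_pos (u v : ℕ × ℕ) (hne : u ≠ v) (hu' : u.1 = 0 → u.2 = 0)
    (hv' : v.1 = 0 → v.2 = 0) : 1 ≤ uniformTwoStarDist u v := by
  rcases u with ⟨uk, ub⟩; rcases v with ⟨vk, vb⟩
  simp only [Prod.mk.injEq, ne_eq] at hne hu' hv' ⊢
  unfold uniformTwoStarDist
  simp only [Prod.mk.injEq, eq_self_iff_true, true_and, and_true, ne_eq]
  split_ifs <;> omega

lemma bp_root_nbr (q : ℕ × ℕ) (hq : q.1 = 0 → q.2 = 0)
    (h1 : uniformTwoStarDist (0,0) q = 1) : 1 ≤ q.1 ∧ q.2 = 0 := by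
  rcases q with ⟨qk, qb⟩
  simp only at hq ⊢
  unfold uniformTwoStarDist at h1
  simp only [Prod.mk.injEq, eq_self_iff_true, true_and, and_true, ne_eq] at h1
  split_ifs at h1 <;> omega

lemma bp_first_nbr (u q : ℕ × ℕ) (hu1 : 1 ≤ u.1) (hu2 : u.2 = 0)
    (hq : q.1 = 0 → q.2 = 0) (h1 : uniformTwoStarDist u q = 1) :
    q = (0,0) ∨ (q.1 = u.1 ∧ 1 ≤ q.2) := by
  rcases u with ⟨uk, ub⟩; rcases q with ⟨qk, qb⟩
  simp only [Prod.mk.injEq] at hu1 hu2 hq ⊢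
  subst hu2
  unfold uniformTwoStarDist at h1
  simp only [Prod.mk.injEq, eq_self_iff_true, true_and, and_true, ne_eq] at h1
  split_ifs at h1 <;> omega

lemma bp_leaf_nbr (u q : ℕ × ℕ) (hu1 : 1 ≤ u.1) (hu2 : 1 ≤ u.2)
    (hq : q.1 = 0 → q.2 = 0) (h1 : uniformTwoStarDist u q = 1) : q = (u.1, 0) := by
  rcases u with ⟨uk, ub⟩; rcases q with ⟨qk, qb⟩
  simp only [Prod.mk.injEq] at hu1 hu2 hq ⊢
  unfold uniformTwoStarDist at h1
  simp only [Prod.mk.injEq, eq_self_iff_true, true_and, and_true, ne_eq] at h1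
  split_ifs at h1 <;> omega

lemma bp_dist_binleaf (u v : ℕ × ℕ) (hu1 : 1 ≤ u.1) (hu2 : 1 ≤ u.2) (hv1 : 1 ≤ v.1)
    (hv2 : 1 ≤ v.2) (hne : u ≠ v) :
    2 ≤ uniformTwoStarDist u v ∧ (uniformTwoStarDist u v ≤ 2 → u.1 = v.1) := by
  rcases u with ⟨uk, ub⟩; rcases v with ⟨vk, vb⟩
  simp only [Prod.mk.injEq, ne_eq] at hu1 hu2 hv1 hv2 hne ⊢
  unfold uniformTwoStarDist
  simp only [Prod.mk.injEq, eq_self_iff_true, true_and, and_true, ne_eq]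
  split_ifs <;> omega

lemma bp_backward (n B K : ℕ) (hn : 2 ≤ n) (hB : 1 ≤ B) (hK : 2 ≤ K) (a : ℕ → ℕ)
    (ha : ∀ i ∈ Finset.Icc 1 n, 1 ≤ a i)
    (hsum : ∑ i ∈ Finset.Icc 1 n, a i = B * K) (f : ℕ × ℕ → ℕ × ℕ)
    (hbij : Set.BijOn f
        ({((0 : ℕ), (0 : ℕ))} ∪
          {p : ℕ × ℕ | 1 ≤ p.1 ∧ p.1 ≤ n ∧ p.2 ≤ a p.1 - 1} ∪
          {p : ℕ × ℕ | n + 1 ≤ p.1 ∧ p.1 ≤ n + K + B ∧ p.2 = 0})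
        ({((0 : ℕ), (0 : ℕ))} ∪
          {p : ℕ × ℕ | 1 ≤ p.1 ∧ p.1 ≤ K + B ∧ p.2 = 0} ∪
          {p : ℕ × ℕ | 1 ≤ p.1 ∧ p.1 ≤ K ∧ 1 ≤ p.2 ∧ p.2 ≤ B}))
    (hcost : (∑ l ∈ Finset.Icc 1 (K + B),
          2 * B * K * uniformTwoStarDist (f (0, 0)) (f (n + l, 0))) +
      (∑ i ∈ Finset.Icc 1 n, ∑ j ∈ Finset.Icc 1 (a i - 1),
          uniformTwoStarDist (f (i, 0)) (f (i, j)))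
        ≤ (K + B) * (2 * B * K) + 2 * ∑ i ∈ Finset.Icc 1 n, (a i - 1)) :
    (∃ g : ℕ → ℕ, (∀ i ∈ Finset.Icc 1 n, g i ∈ Finset.Icc 1 K) ∧
        ∀ k ∈ Finset.Icc 1 K,
          ∑ i ∈ (Finset.Icc 1 n).filter (fun i => g i = k), a i ≤ B) := by
  classical
  have hinj := hbij.injOn
  have hPmem := hbij.mapsTo
  -- memberships in the virtual set
  have hVroot : ((0,0) : ℕ × ℕ) ∈
      ({((0 : ℕ), (0 : ℕ))} ∪
        {p : ℕ × ℕ | 1 ≤ p.1 ∧ p.1 ≤ n ∧ p.2 ≤ a p.1 - 1} ∪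
        {p : ℕ × ℕ | n + 1 ≤ p.1 ∧ p.1 ≤ n + K + B ∧ p.2 = 0}) := by
    simp only [Set.mem_union, Set.mem_singleton_iff, Set.mem_setOf_eq]
    left; left; trivial
  have hVgrp : ∀ i j : ℕ, 1 ≤ i → i ≤ n → j ≤ a i - 1 → ((i,j) : ℕ × ℕ) ∈
      ({((0 : ℕ), (0 : ℕ))} ∪
        {p : ℕ × ℕ | 1 ≤ p.1 ∧ p.1 ≤ n ∧ p.2 ≤ a p.1 - 1} ∪
        {p : ℕ × ℕ | n + 1 ≤ p.1 ∧ p.1 ≤ n + K + B ∧ p.2 = 0}) := by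
    intro i j h1 h2 h3
    simp only [Set.mem_union, Set.mem_singleton_iff, Set.mem_setOf_eq]
    left; right; exact ⟨h1, h2, h3⟩
  have hVdum : ∀ l : ℕ, 1 ≤ l → l ≤ K + B → ((n + l, 0) : ℕ × ℕ) ∈
      ({((0 : ℕ), (0 : ℕ))} ∪
        {p : ℕ × ℕ | 1 ≤ p.1 ∧ p.1 ≤ n ∧ p.2 ≤ a p.1 - 1} ∪
        {p : ℕ × ℕ | n + 1 ≤ p.1 ∧ p.1 ≤ n + K + B ∧ p.2 = 0}) := by
    intro l h1 h2
    simp only [Set.mem_union, Set.mem_singleton_iff, Set.mem_setOf_eq]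
    right; exact ⟨by omega, by omega, by trivial⟩
  -- characterization of physical points
  have hPchar : ∀ q : ℕ × ℕ, q ∈
      ({((0 : ℕ), (0 : ℕ))} ∪
        {p : ℕ × ℕ | 1 ≤ p.1 ∧ p.1 ≤ K + B ∧ p.2 = 0} ∪
        {p : ℕ × ℕ | 1 ≤ p.1 ∧ p.1 ≤ K ∧ 1 ≤ p.2 ∧ p.2 ≤ B}) →
      (q = (0,0) ∨ (1 ≤ q.1 ∧ q.1 ≤ K + B ∧ q.2 = 0) ∨
        (1 ≤ q.1 ∧ q.1 ≤ K ∧ 1 ≤ q.2 ∧ q.2 ≤ B)) := by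
    intro q hq
    simpa only [Set.mem_union, Set.mem_singleton_iff, Set.mem_setOf_eq, or_assoc] using hq
  have hphys0 : ∀ q : ℕ × ℕ, q ∈
      ({((0 : ℕ), (0 : ℕ))} ∪
        {p : ℕ × ℕ | 1 ≤ p.1 ∧ p.1 ≤ K + B ∧ p.2 = 0} ∪
        {p : ℕ × ℕ | 1 ≤ p.1 ∧ p.1 ≤ K ∧ 1 ≤ p.2 ∧ p.2 ≤ B}) →
      (q.1 = 0 → q.2 = 0) := by
    intro q hq h0
    rcases hPchar q hq with h | ⟨h1, h2, h3⟩ | ⟨h1, h2, h3, h4⟩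
    · rw [h]
    · exact h3
    · omega
  -- arithmetic on sums
  have hA : (∑ i ∈ Finset.Icc 1 n, (a i - 1)) + n = B * K := by
    have h1 : ∑ i ∈ Finset.Icc 1 n, (a i - 1 + 1) = ∑ i ∈ Finset.Icc 1 n, a i := by
      apply Finset.sum_congr rfl
      intro i hi
      have := ha i hi
      omega
    rw [Finset.sum_add_distrib, Finset.sum_const, Nat.card_Icc, smul_eq_mul] at h1
    omega
  -- injectivity of dummies
  have hdne : ∀ l l' : ℕ, 1 ≤ l → l ≤ K + B → 1 ≤ l' → l' ≤ K + B →
      f (n + l, 0) = f (n + l', 0) → l = l' := by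
    intro l l' a1 a2 a3 a4 h
    have := hinj (hVdum l a1 a2) (hVdum l' a3 a4) h
    simp only [Prod.mk.injEq] at this
    omega
  -- dummy distances are at least 1
  have hd1 : ∀ l ∈ Finset.Icc 1 (K + B),
      1 ≤ uniformTwoStarDist (f (0, 0)) (f (n + l, 0)) := by
    intro l hl
    obtain ⟨hl1, hl2⟩ := Finset.mem_Icc.mp hl
    apply bp_dist_pos
    · intro h
      have := hinj hVroot (hVdum l hl1 hl2) h
      simp only [Prod.mk.injEq] at this
      omega
    · exact hphys0 _ (hPmem hVroot)
    · exact hphys0 _ (hPmem (hVdum l hl1 hl2))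
  -- dummy distances are exactly 1
  have hd1' : ∀ l ∈ Finset.Icc 1 (K + B),
      uniformTwoStarDist (f (0, 0)) (f (n + l, 0)) = 1 := by
    intro l hl
    by_contra hne2
    have h2 : 2 ≤ uniformTwoStarDist (f (0, 0)) (f (n + l, 0)) := by
      have := hd1 l hl
      omega
    have hsplit : (∑ l' ∈ Finset.Icc 1 (K + B),
        2 * B * K * uniformTwoStarDist (f (0, 0)) (f (n + l', 0)))
        = 2 * B * K * uniformTwoStarDist (f (0, 0)) (f (n + l, 0)) +
          ∑ l' ∈ (Finset.Icc 1 (K + B)).erase l,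
            2 * B * K * uniformTwoStarDist (f (0, 0)) (f (n + l', 0)) :=
      (Finset.add_sum_erase _ _ hl).symm
    have hrest : ∑ l' ∈ (Finset.Icc 1 (K + B)).erase l, 2 * B * K ≤
        ∑ l' ∈ (Finset.Icc 1 (K + B)).erase l,
          2 * B * K * uniformTwoStarDist (f (0, 0)) (f (n + l', 0)) := by
      apply Finset.sum_le_sum
      intro l' hl'
      have h1 := hd1 l' (Finset.mem_of_mem_erase hl')
      calc 2 * B * K = 2 * B * K * 1 := (mul_one _).symm
        _ ≤ _ := Nat.mul_le_mul_left _ h1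
    have hcarde : ((Finset.Icc 1 (K + B)).erase l).card = K + B - 1 := by
      rw [Finset.card_erase_of_mem hl, Nat.card_Icc]
      omega
    rw [Finset.sum_const, hcarde, smul_eq_mul] at hrest
    have hxl : 2 * B * K * 2 ≤ 2 * B * K * uniformTwoStarDist (f (0, 0)) (f (n + l, 0)) :=
      Nat.mul_le_mul_left _ h2
    have hr1 : (K + B - 1) * (2 * B * K) = (K + B) * (2 * B * K) - 2 * B * K :=
      Nat.sub_one_mul _ _
    have hr2 : 2 * B * K ≤ (K + B) * (2 * B * K) :=
      Nat.le_mul_of_pos_left _ (by omega)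
    have hr3 : 2 * B * K = 2 * (B * K) := by ring
    have hr4 : 2 * B * K * 2 = 4 * (B * K) := by ring
    omega
  -- the root must be embedded at the physical root
  have hroot : f (0, 0) = (0, 0) := by
    rcases hPchar _ (hPmem hVroot) with h0 | ⟨h1, h2, h3⟩ | ⟨h1, h2, h3, h4⟩
    · exact h0
    · -- first-level vertex: at most 1 + B neighbours, too few for the dummies
      exfalso
      set N : Finset (ℕ × ℕ) := insert (0,0) ({(f (0,0)).1} ×ˢ Finset.Icc 1 B) with hN
      have hmaps : ∀ l ∈ Finset.Icc 1 (K + B), f (n + l, 0) ∈ N := by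
        intro l hl
        obtain ⟨hl1, hl2⟩ := Finset.mem_Icc.mp hl
        have hq := hphys0 _ (hPmem (hVdum l hl1 hl2))
        have hnb := bp_first_nbr (f (0,0)) (f (n + l, 0)) h1 h3 hq (hd1' l hl)
        rcases hnb with h | ⟨ha', hb'⟩
        · rw [hN, h]; exact Finset.mem_insert_self _ _
        · rw [hN]
          apply Finset.mem_insert_of_mem
          rw [Finset.mem_product, Finset.mem_singleton, Finset.mem_Icc]
          refine ⟨ha', hb', ?_⟩
          rcases hPchar _ (hPmem (hVdum l hl1 hl2)) with h0' | ⟨u1, u2, u3⟩ | ⟨u1, u2, u3, u4⟩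
          · rw [h0'] at hb'; simp at hb'
          · omega
          · exact u4
      have hcard := Finset.card_le_card_of_injOn _ hmaps (fun l hl l' hl' h => by
        simp only [Finset.coe_Icc, Set.mem_Icc] at hl hl'
        exact hdne l l' hl.1 hl.2 hl'.1 hl'.2 h)
      have hcN : N.card ≤ 1 + B := by
        calc N.card ≤ ({(f (0,0)).1} ×ˢ Finset.Icc 1 B).card + 1 := Finset.card_insert_le _ _
          _ = 1 * (B + 1 - 1) + 1 := by
              rw [Finset.card_product, Finset.card_singleton, Nat.card_Icc]
          _ ≤ 1 + B := by omega
      rw [Nat.card_Icc] at hcard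
      omega
    · -- bin leaf: only one neighbour
      exfalso
      have h12 : ∀ l, 1 ≤ l → l ≤ K + B → f (n + l, 0) = ((f (0,0)).1, 0) := by
        intro l hl1 hl2
        exact bp_leaf_nbr _ _ h1 h3 (hphys0 _ (hPmem (hVdum l hl1 hl2)))
          (hd1' l (Finset.mem_Icc.mpr ⟨hl1, hl2⟩))
      have e1 := h12 1 (by omega) (by omega)
      have e2 := h12 2 (by omega) (by omega)
      have := hdne 1 2 (by omega) (by omega) (by omega) (by omega) (e1.trans e2.symm)
      omega
  -- dummies exactly cover the first-level vertices
  have hcover : (Finset.Icc 1 (K + B)).image (fun l => f (n + l, 0)) =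
      (Finset.Icc 1 (K + B)) ×ˢ ({0} : Finset ℕ) := by
    apply Finset.eq_of_subset_of_card_le
    · intro q hq
      obtain ⟨l, hl, rfl⟩ := Finset.mem_image.mp hq
      obtain ⟨hl1, hl2⟩ := Finset.mem_Icc.mp hl
      have hnb := bp_root_nbr (f (n + l, 0)) (hphys0 _ (hPmem (hVdum l hl1 hl2)))
        (by rw [← hroot]; exact hd1' l hl)
      rw [Finset.mem_product, Finset.mem_Icc, Finset.mem_singleton]
      rcases hPchar _ (hPmem (hVdum l hl1 hl2)) with h0' | ⟨u1, u2, u3⟩ | ⟨u1, u2, u3, u4⟩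
      · rw [h0'] at hnb; simp at hnb
      · exact ⟨⟨hnb.1, u2⟩, hnb.2⟩
      · omega
    · rw [Finset.card_product, Finset.card_singleton, Nat.card_Icc,
        Finset.card_image_of_injOn (fun l hl l' hl' h => by
          simp only [Finset.coe_Icc, Set.mem_Icc] at hl hl'
          exact hdne l l' hl.1 hl.2 hl'.1 hl'.2 h), Nat.card_Icc]
      omega
  -- all group vertices are embedded into bin leaves
  have himg : ∀ i j : ℕ, 1 ≤ i → i ≤ n → j ≤ a i - 1 →
      1 ≤ (f (i,j)).1 ∧ (f (i,j)).1 ≤ K ∧ 1 ≤ (f (i,j)).2 ∧ (f (i,j)).2 ≤ B := by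
    intro i j h1 h2 h3
    rcases hPchar _ (hPmem (hVgrp i j h1 h2 h3)) with h0 | ⟨u1, u2, u3⟩ | h
    · exfalso
      have := hinj (hVgrp i j h1 h2 h3) hVroot (by rw [h0, hroot])
      simp only [Prod.mk.injEq] at this
      omega
    · exfalso
      have hmemF : f (i,j) ∈ (Finset.Icc 1 (K + B)) ×ˢ ({0} : Finset ℕ) := by
        rw [Finset.mem_product, Finset.mem_Icc, Finset.mem_singleton]
        exact ⟨⟨u1, u2⟩, u3⟩
      rw [← hcover] at hmemF
      obtain ⟨l, hl, hfl⟩ := Finset.mem_image.mp hmemF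
      obtain ⟨hl1, hl2⟩ := Finset.mem_Icc.mp hl
      have := hinj (hVdum l hl1 hl2) (hVgrp i j h1 h2 h3) hfl
      simp only [Prod.mk.injEq] at this
      omega
    · exact h
  -- group vertices within the same group map to distinct leaves
  have hfne : ∀ i j j' : ℕ, 1 ≤ i → i ≤ n → j ≤ a i - 1 → j' ≤ a i - 1 → j ≠ j' →
      f (i, j) ≠ f (i, j') := by
    intro i j j' h1 h2 h3 h4 hne h
    have := hinj (hVgrp i j h1 h2 h3) (hVgrp i j' h1 h2 h4) h
    simp only [Prod.mk.injEq] at this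
    omega
  -- internal distances: at least 2, and exactly 2 only within the same bin
  have hDlb : ∀ i ∈ Finset.Icc 1 n, ∀ j ∈ Finset.Icc 1 (a i - 1),
      2 ≤ uniformTwoStarDist (f (i, 0)) (f (i, j)) ∧
        (uniformTwoStarDist (f (i, 0)) (f (i, j)) ≤ 2 → (f (i, 0)).1 = (f (i, j)).1) := by
    intro i hi j hj
    obtain ⟨hi1, hi2⟩ := Finset.mem_Icc.mp hi
    obtain ⟨hj1, hj2⟩ := Finset.mem_Icc.mp hj
    have h0 := himg i 0 hi1 hi2 (Nat.zero_le _)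
    have hj' := himg i j hi1 hi2 hj2
    exact bp_dist_binleaf _ _ h0.1 h0.2.2.1 hj'.1 hj'.2.2.1
      (hfne i 0 j hi1 hi2 (Nat.zero_le _) hj2 (by omega))
  -- the first sum is exactly (K+B)·x
  have hS1 : (∑ l ∈ Finset.Icc 1 (K + B),
      2 * B * K * uniformTwoStarDist (f (0, 0)) (f (n + l, 0))) = (K + B) * (2 * B * K) := by
    have hterm : ∀ l ∈ Finset.Icc 1 (K + B),
        2 * B * K * uniformTwoStarDist (f (0, 0)) (f (n + l, 0)) = 2 * B * K := by
      intro l hl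
      rw [hd1' l hl, mul_one]
    rw [Finset.sum_congr rfl hterm, Finset.sum_const, Nat.card_Icc, Nat.add_sub_cancel,
      smul_eq_mul]
  have hS2ub : (∑ i ∈ Finset.Icc 1 n, ∑ j ∈ Finset.Icc 1 (a i - 1),
      uniformTwoStarDist (f (i, 0)) (f (i, j))) ≤ 2 * ∑ i ∈ Finset.Icc 1 n, (a i - 1) := by
    rw [hS1] at hcost
    omega
  have hinlb : ∀ i ∈ Finset.Icc 1 n, 2 * (a i - 1) ≤
      ∑ j ∈ Finset.Icc 1 (a i - 1), uniformTwoStarDist (f (i, 0)) (f (i, j)) := by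
    intro i hi
    calc 2 * (a i - 1) = ∑ _j ∈ Finset.Icc 1 (a i - 1), 2 := by
          rw [Finset.sum_const, Nat.card_Icc, Nat.add_sub_cancel, smul_eq_mul, Nat.mul_comm]
      _ ≤ _ := Finset.sum_le_sum (fun j hj => (hDlb i hi j hj).1)
  -- every internal distance is exactly 2
  have hDub : ∀ i ∈ Finset.Icc 1 n, ∀ j ∈ Finset.Icc 1 (a i - 1),
      uniformTwoStarDist (f (i, 0)) (f (i, j)) ≤ 2 := by
    by_contra hc
    push_neg at hc
    obtain ⟨i0, hi0, j0, hj0, hgt⟩ := hc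
    -- the inner sum at i0 is at least 2(a i0 - 1) + 1
    have hsplit0 : (∑ j ∈ Finset.Icc 1 (a i0 - 1), uniformTwoStarDist (f (i0, 0)) (f (i0, j)))
        = uniformTwoStarDist (f (i0, 0)) (f (i0, j0)) +
          ∑ j ∈ (Finset.Icc 1 (a i0 - 1)).erase j0,
            uniformTwoStarDist (f (i0, 0)) (f (i0, j)) :=
      (Finset.add_sum_erase _ _ hj0).symm
    have hrest0 : ∑ j ∈ (Finset.Icc 1 (a i0 - 1)).erase j0, 2 ≤
        ∑ j ∈ (Finset.Icc 1 (a i0 - 1)).erase j0,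
          uniformTwoStarDist (f (i0, 0)) (f (i0, j)) :=
      Finset.sum_le_sum (fun j hj => (hDlb i0 hi0 j (Finset.mem_of_mem_erase hj)).1)
    have hcard0 : ((Finset.Icc 1 (a i0 - 1)).erase j0).card = a i0 - 1 - 1 := by
      rw [Finset.card_erase_of_mem hj0, Nat.card_Icc]
      omega
    rw [Finset.sum_const, hcard0, smul_eq_mul] at hrest0
    obtain ⟨hj01, hj02⟩ := Finset.mem_Icc.mp hj0
    have hin0 : 2 * (a i0 - 1) + 1 ≤
        ∑ j ∈ Finset.Icc 1 (a i0 - 1), uniformTwoStarDist (f (i0, 0)) (f (i0, j)) := by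
      omega
    -- total
    have hsplit1 : (∑ i ∈ Finset.Icc 1 n, ∑ j ∈ Finset.Icc 1 (a i - 1),
        uniformTwoStarDist (f (i, 0)) (f (i, j)))
        = (∑ j ∈ Finset.Icc 1 (a i0 - 1), uniformTwoStarDist (f (i0, 0)) (f (i0, j))) +
          ∑ i ∈ (Finset.Icc 1 n).erase i0, ∑ j ∈ Finset.Icc 1 (a i - 1),
            uniformTwoStarDist (f (i, 0)) (f (i, j)) :=
      (Finset.add_sum_erase _ _ hi0).symm
    have hrest1 : ∑ i ∈ (Finset.Icc 1 n).erase i0, 2 * (a i - 1) ≤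
        ∑ i ∈ (Finset.Icc 1 n).erase i0, ∑ j ∈ Finset.Icc 1 (a i - 1),
          uniformTwoStarDist (f (i, 0)) (f (i, j)) :=
      Finset.sum_le_sum (fun i hi => hinlb i (Finset.mem_of_mem_erase hi))
    have htot : (∑ i ∈ Finset.Icc 1 n, 2 * (a i - 1)) =
        2 * (a i0 - 1) + ∑ i ∈ (Finset.Icc 1 n).erase i0, 2 * (a i - 1) :=
      (Finset.add_sum_erase _ _ hi0).symm
    have hmulsum : (∑ i ∈ Finset.Icc 1 n, 2 * (a i - 1)) =
        2 * ∑ i ∈ Finset.Icc 1 n, (a i - 1) := (Finset.mul_sum _ _ _).symm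
    omega
  have hbin : ∀ i ∈ Finset.Icc 1 n, ∀ j ∈ Finset.Icc 1 (a i - 1),
      (f (i, 0)).1 = (f (i, j)).1 :=
    fun i hi j hj => (hDlb i hi j hj).2 (hDub i hi j hj)
  -- define the packing
  refine ⟨fun i => (f (i, 0)).1, ?_, ?_⟩
  · intro i hi
    obtain ⟨hi1, hi2⟩ := Finset.mem_Icc.mp hi
    have := himg i 0 hi1 hi2 (Nat.zero_le _)
    exact Finset.mem_Icc.mpr ⟨this.1, this.2.1⟩
  · intro k hk
    obtain ⟨hk1, hk2⟩ := Finset.mem_Icc.mp hk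
    set U : Finset (ℕ × ℕ) :=
      ((Finset.Icc 1 n).filter (fun i => (f (i, 0)).1 = k)).biUnion
        (fun i => {i} ×ˢ Finset.Icc 0 (a i - 1)) with hU
    have hcardU : U.card =
        ∑ i ∈ (Finset.Icc 1 n).filter (fun i => (f (i, 0)).1 = k), a i := by
      rw [hU, Finset.card_biUnion]
      · apply Finset.sum_congr rfl
        intro i hi
        rw [Finset.card_product, Finset.card_singleton, Nat.card_Icc]
        have := ha i (Finset.mem_of_mem_filter i hi)
        omega
      · intro i _ j _ hij
        rw [Function.onFun, Finset.disjoint_left]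
        intro p hp hq
        rw [Finset.mem_product, Finset.mem_singleton] at hp hq
        exact hij (hp.1 ▸ hq.1)
    have hmapsU : ∀ p ∈ U, f p ∈ ({k} : Finset ℕ) ×ˢ Finset.Icc 1 B := by
      intro p hp
      rw [hU, Finset.mem_biUnion] at hp
      obtain ⟨i, hi, hpmem⟩ := hp
      rw [Finset.mem_filter, Finset.mem_Icc] at hi
      obtain ⟨⟨hi1, hi2⟩, hik⟩ := hi
      rw [Finset.mem_product, Finset.mem_singleton, Finset.mem_Icc] at hpmem
      obtain ⟨hp1, _, hp2⟩ := hpmem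
      rcases p with ⟨p1, p2⟩
      simp only at hp1 hp2
      subst hp1
      have him := himg p1 p2 hi1 hi2 hp2
      rw [Finset.mem_product, Finset.mem_singleton, Finset.mem_Icc]
      refine ⟨?_, him.2.2.1, him.2.2.2⟩
      rcases Nat.eq_zero_or_pos p2 with h0 | hpos
      · subst h0; exact hik
      · rw [← hbin p1 (Finset.mem_Icc.mpr ⟨hi1, hi2⟩) p2 (Finset.mem_Icc.mpr ⟨hpos, hp2⟩)]
        exact hik
    have hinjU : Set.InjOn f ↑U := by
      intro p hp q hq h
      rw [Finset.mem_coe, hU, Finset.mem_biUnion] at hp hq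
      obtain ⟨i, hi, hpmem⟩ := hp
      obtain ⟨i', hi', hqmem⟩ := hq
      rw [Finset.mem_filter, Finset.mem_Icc] at hi hi'
      rw [Finset.mem_product, Finset.mem_singleton, Finset.mem_Icc] at hpmem hqmem
      exact hinj
        (by rcases p with ⟨p1, p2⟩
            simp only at hpmem
            have := hpmem.1; subst this
            exact hVgrp p1 p2 hi.1.1 hi.1.2 hpmem.2.2)
        (by rcases q with ⟨q1, q2⟩
            simp only at hqmem
            have := hqmem.1; subst this
            exact hVgrp q1 q2 hi'.1.1 hi'.1.2 hqmem.2.2) h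
    have hcard := Finset.card_le_card_of_injOn f hmapsU hinjU
    rw [hcardU, Finset.card_product, Finset.card_singleton, Nat.card_Icc] at hcard
    show ∑ i ∈ (Finset.Icc 1 n).filter (fun i => (f (i, 0)).1 = k), a i ≤ B
    omega
lemma bp_prefix_cover (a : ℕ → ℕ) (T : Finset ℕ) (b : ℕ) (hb : 1 ≤ b)
    (hb2 : b ≤ ∑ i ∈ T, a i) :
    ∃ i ∈ T, (∑ i' ∈ T.filter (· < i), a i') < b ∧
      b ≤ (∑ i' ∈ T.filter (· < i), a i') + a i := by
  induction T using Finset.induction_on_max with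
  | empty => simp at hb2; omega
  | insert m T hm ih =>
    have hfm : (insert m T).filter (· < m) = T := by
      ext x
      simp only [Finset.mem_filter, Finset.mem_insert]
      constructor
      · rintro ⟨h1 | h1, h2⟩
        · omega
        · exact h1
      · intro hx; exact ⟨Or.inr hx, hm x hx⟩
    have hsum : ∑ i ∈ insert m T, a i = a m + ∑ i ∈ T, a i :=
      Finset.sum_insert (fun h => absurd (hm m h) (lt_irrefl m))
    by_cases hcase : ∑ i' ∈ T, a i' < b
    · refine ⟨m, Finset.mem_insert_self m T, ?_, ?_⟩
      · rw [hfm]; exact hcase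
      · rw [hfm]; omega
    · push_neg at hcase
      obtain ⟨i, hiT, h1, h2⟩ := ih hcase
      have hfi : (insert m T).filter (· < i) = T.filter (· < i) := by
        ext x
        simp only [Finset.mem_filter, Finset.mem_insert]
        constructor
        · rintro ⟨h3 | h3, h4⟩
          · exfalso; have := hm i hiT; omega
          · exact ⟨h3, h4⟩
        · rintro ⟨h3, h4⟩; exact ⟨Or.inr h3, h4⟩
      exact ⟨i, Finset.mem_insert_of_mem hiT, by rw [hfi]; exact h1, by rw [hfi]; exact h2⟩

lemma bp_bins_full (n B K : ℕ) (hK : 1 ≤ K) (a g : ℕ → ℕ)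
    (hg1 : ∀ i ∈ Finset.Icc 1 n, g i ∈ Finset.Icc 1 K)
    (hg2 : ∀ k ∈ Finset.Icc 1 K, ∑ i ∈ (Finset.Icc 1 n).filter (fun i => g i = k), a i ≤ B)
    (hsum : ∑ i ∈ Finset.Icc 1 n, a i = B * K) :
    ∀ k ∈ Finset.Icc 1 K, ∑ i ∈ (Finset.Icc 1 n).filter (fun i => g i = k), a i = B := by
  have hfib : ∑ k ∈ Finset.Icc 1 K, ∑ i ∈ (Finset.Icc 1 n).filter (fun i => g i = k), a i
      = B * K := by
    rw [Finset.sum_fiberwise_of_maps_to (fun i hi => hg1 i hi)]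
    exact hsum
  by_contra hcon
  push_neg at hcon
  obtain ⟨k0, hk0, hne⟩ := hcon
  have hlt : ∑ i ∈ (Finset.Icc 1 n).filter (fun i => g i = k0), a i < B :=
    lt_of_le_of_ne (hg2 k0 hk0) hne
  have : ∑ k ∈ Finset.Icc 1 K, ∑ i ∈ (Finset.Icc 1 n).filter (fun i => g i = k), a i
      < ∑ k ∈ Finset.Icc 1 K, B := by
    apply Finset.sum_lt_sum (fun k hk => hg2 k hk) ⟨k0, hk0, hlt⟩
  rw [hfib, Finset.sum_const, Nat.card_Icc] at this
  simp only [Nat.add_sub_cancel, smul_eq_mul] at this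
  have hmc : B * K = K * B := Nat.mul_comm B K
  omega

lemma bp_forward (n B K : ℕ) (hn : 2 ≤ n) (hB : 1 ≤ B) (hK : 2 ≤ K) (a : ℕ → ℕ)
    (ha : ∀ i ∈ Finset.Icc 1 n, 1 ≤ a i)
    (hsum : ∑ i ∈ Finset.Icc 1 n, a i = B * K) (g : ℕ → ℕ)
    (hg1 : ∀ i ∈ Finset.Icc 1 n, g i ∈ Finset.Icc 1 K)
    (hg2 : ∀ k ∈ Finset.Icc 1 K,
      ∑ i ∈ (Finset.Icc 1 n).filter (fun i => g i = k), a i ≤ B) :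
    (∃ f : ℕ × ℕ → ℕ × ℕ,
      Set.BijOn f
        ({((0 : ℕ), (0 : ℕ))} ∪
          {p : ℕ × ℕ | 1 ≤ p.1 ∧ p.1 ≤ n ∧ p.2 ≤ a p.1 - 1} ∪
          {p : ℕ × ℕ | n + 1 ≤ p.1 ∧ p.1 ≤ n + K + B ∧ p.2 = 0})
        ({((0 : ℕ), (0 : ℕ))} ∪
          {p : ℕ × ℕ | 1 ≤ p.1 ∧ p.1 ≤ K + B ∧ p.2 = 0} ∪
          {p : ℕ × ℕ | 1 ≤ p.1 ∧ p.1 ≤ K ∧ 1 ≤ p.2 ∧ p.2 ≤ B}) ∧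
      (∑ l ∈ Finset.Icc 1 (K + B),
          2 * B * K * uniformTwoStarDist (f (0, 0)) (f (n + l, 0))) +
      (∑ i ∈ Finset.Icc 1 n, ∑ j ∈ Finset.Icc 1 (a i - 1),
          uniformTwoStarDist (f (i, 0)) (f (i, j)))
        ≤ (K + B) * (2 * B * K) + 2 * ∑ i ∈ Finset.Icc 1 n, (a i - 1)) := by
  classical
  have hfull := bp_bins_full n B K (by omega) a g hg1 hg2 hsum
  set o : ℕ → ℕ :=
    fun i => ∑ i' ∈ (Finset.Icc 1 n).filter (fun i' => g i' = g i ∧ i' < i), a i' with ho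
  set f : ℕ × ℕ → ℕ × ℕ := fun p => if p.1 = 0 then ((0:ℕ),(0:ℕ))
    else if p.1 ≤ n then (g p.1, o p.1 + p.2 + 1) else (p.1 - n, 0) with hf
  have hga : ∀ i, 1 ≤ i → i ≤ n → 1 ≤ g i ∧ g i ≤ K := by
    intro i h1 h2
    have := hg1 i (Finset.mem_Icc.mpr ⟨h1, h2⟩)
    simpa [Finset.mem_Icc] using this
  have hfullB : ∀ i, 1 ≤ i → i ≤ n →
      ∑ i' ∈ (Finset.Icc 1 n).filter (fun i' => g i' = g i), a i' = B := by
    intro i h1 h2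
    exact hfull (g i) (Finset.mem_Icc.mpr (hga i h1 h2))
  have hoB : ∀ i, 1 ≤ i → i ≤ n → o i + a i ≤ B := by
    intro i h1 h2
    have hnotmem : i ∉ (Finset.Icc 1 n).filter (fun i' => g i' = g i ∧ i' < i) := by
      simp [Finset.mem_filter]
    have heq : o i + a i =
        ∑ i' ∈ insert i ((Finset.Icc 1 n).filter (fun i' => g i' = g i ∧ i' < i)), a i' := by
      rw [Finset.sum_insert hnotmem, ho]; ring
    have hsub : insert i ((Finset.Icc 1 n).filter (fun i' => g i' = g i ∧ i' < i)) ⊆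
        (Finset.Icc 1 n).filter (fun i' => g i' = g i) := by
      intro x hx
      simp only [Finset.mem_insert, Finset.mem_filter, Finset.mem_Icc] at hx ⊢
      rcases hx with rfl | ⟨hx1, hx2, _⟩
      · exact ⟨⟨h1, h2⟩, rfl⟩
      · exact ⟨hx1, hx2⟩
    calc o i + a i = _ := heq
      _ ≤ ∑ i' ∈ (Finset.Icc 1 n).filter (fun i' => g i' = g i), a i' :=
          Finset.sum_le_sum_of_subset hsub
      _ = B := hfullB i h1 h2
  -- order separation within a bin
  have hkey : ∀ i i', 1 ≤ i → i < i' → i' ≤ n → g i = g i' → o i + a i ≤ o i' := by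
    intro i i' h1 h2 h3 hgg
    have hnotmem : i ∉ (Finset.Icc 1 n).filter (fun x => g x = g i ∧ x < i) := by
      simp [Finset.mem_filter]
    have heq : o i + a i =
        ∑ x ∈ insert i ((Finset.Icc 1 n).filter (fun x => g x = g i ∧ x < i)), a x := by
      rw [Finset.sum_insert hnotmem, ho]; ring
    have hsub : insert i ((Finset.Icc 1 n).filter (fun x => g x = g i ∧ x < i)) ⊆
        (Finset.Icc 1 n).filter (fun x => g x = g i' ∧ x < i') := by
      intro x hx
      simp only [Finset.mem_insert, Finset.mem_filter, Finset.mem_Icc] at hx ⊢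
      rcases hx with rfl | ⟨hx1, hx2, hx3⟩
      · exact ⟨⟨h1, by omega⟩, hgg, h2⟩
      · exact ⟨hx1, by rw [hx2, hgg], by omega⟩
    rw [heq, ho]
    exact Finset.sum_le_sum_of_subset hsub
  have hf0 : f (0, 0) = (0, 0) := by simp [hf]
  have hfd : ∀ l, 1 ≤ l → f (n + l, 0) = (l, 0) := by
    intro l hl
    simp only [hf]
    rw [if_neg (by omega), if_neg (by omega)]
    simp only [Nat.add_sub_cancel_left]
  have hfg : ∀ i j, 1 ≤ i → i ≤ n → f (i, j) = (g i, o i + j + 1) := by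
    intro i j h1 h2
    simp only [hf]
    rw [if_neg (by omega), if_pos (by omega)]
  refine ⟨f, ⟨?_, ?_, ?_⟩, ?_⟩
  · -- MapsTo
    intro p hp
    simp only [Set.mem_union, Set.mem_singleton_iff, Set.mem_setOf_eq] at hp ⊢
    rcases hp with (rfl | ⟨h1, h2, h3⟩) | ⟨h1, h2, h3⟩
    · left; left; exact hf0
    · rcases p with ⟨i, j⟩
      rw [hfg i j h1 h2]
      right
      have hai := ha i (Finset.mem_Icc.mpr ⟨h1, h2⟩)
      have := hoB i h1 h2
      have := hga i h1 h2
      simp only at h3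
      exact ⟨this.1, this.2, by omega, by omega⟩
    · rcases p with ⟨m, j⟩
      simp only at h1 h2 h3
      subst h3
      have : m = n + (m - n) := by omega
      rw [this, hfd (m - n) (by omega)]
      left; right
      exact ⟨by omega, by omega, rfl⟩
  · -- InjOn
    intro p hp q hq heq
    simp only [Set.mem_union, Set.mem_singleton_iff, Set.mem_setOf_eq] at hp hq
    have hgroup : ∀ i i' j j', 1 ≤ i → i < i' → i' ≤ n → j ≤ a i - 1 →
        ¬ ((g i, o i + j + 1) = (g i', o i' + j' + 1)) := by
      intro i i' j j' h1 h2 h3 hj hcon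
      rw [Prod.mk.injEq] at hcon
      have hsep := hkey i i' h1 h2 h3 hcon.1
      have hai := ha i (Finset.mem_Icc.mpr ⟨h1, by omega⟩)
      omega
    rcases p with ⟨p1, p2⟩; rcases q with ⟨q1, q2⟩
    simp only at hp hq
    rcases hp with (hp | ⟨hp1, hp2, hp3⟩) | ⟨hp1, hp2, hp3⟩ <;>
      rcases hq with (hq | ⟨hq1, hq2, hq3⟩) | ⟨hq1, hq2, hq3⟩
    · rw [hp, hq]
    · exfalso
      rw [Prod.mk.injEq] at hp
      obtain ⟨rfl, rfl⟩ := hp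
      rw [hf0, hfg q1 q2 hq1 hq2, Prod.mk.injEq] at heq
      have := hga q1 hq1 hq2
      omega
    · exfalso
      rw [Prod.mk.injEq] at hp
      obtain ⟨rfl, rfl⟩ := hp
      subst hq3
      have h' : q1 = n + (q1 - n) := by omega
      rw [hf0, h', hfd (q1 - n) (by omega), Prod.mk.injEq] at heq
      omega
    · exfalso
      rw [Prod.mk.injEq] at hq
      obtain ⟨rfl, rfl⟩ := hq
      rw [hf0, hfg p1 p2 hp1 hp2, Prod.mk.injEq] at heq
      have := hga p1 hp1 hp2
      omega
    · -- both group
      rw [hfg p1 p2 hp1 hp2, hfg q1 q2 hq1 hq2] at heq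
      rcases lt_trichotomy p1 q1 with h | h | h
      · exact absurd heq (hgroup p1 q1 p2 q2 hp1 h hq2 hp3)
      · subst h
        rw [Prod.mk.injEq] at heq
        rw [Prod.mk.injEq]
        exact ⟨rfl, by omega⟩
      · exact absurd heq.symm (hgroup q1 p1 q2 p2 hq1 h hp2 hq3)
    · exfalso
      subst hq3
      have hq1' : q1 = n + (q1 - n) := by omega
      rw [hfg p1 p2 hp1 hp2, hq1', hfd (q1 - n) (by omega), Prod.mk.injEq] at heq
      omega
    · exfalso
      rw [Prod.mk.injEq] at hq
      obtain ⟨rfl, rfl⟩ := hq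
      subst hp3
      have h' : p1 = n + (p1 - n) := by omega
      rw [hf0, h', hfd (p1 - n) (by omega), Prod.mk.injEq] at heq
      omega
    · exfalso
      subst hp3
      have hp1' : p1 = n + (p1 - n) := by omega
      rw [hfg q1 q2 hq1 hq2, hp1', hfd (p1 - n) (by omega), Prod.mk.injEq] at heq
      omega
    · subst hp3; subst hq3
      have hp1' : p1 = n + (p1 - n) := by omega
      have hq1' : q1 = n + (q1 - n) := by omega
      rw [hp1', hfd (p1 - n) (by omega), hq1', hfd (q1 - n) (by omega),
        Prod.mk.injEq] at heq
      rw [Prod.mk.injEq]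
      constructor
      · omega
      · rfl
  · -- SurjOn
    intro q hq
    simp only [Set.mem_union, Set.mem_singleton_iff, Set.mem_setOf_eq] at hq
    rcases q with ⟨q1, q2⟩
    simp only at hq
    rcases hq with (hq | ⟨h1, h2, h3⟩) | ⟨h1, h2, h3, h4⟩
    · rw [Prod.mk.injEq] at hq
      obtain ⟨rfl, rfl⟩ := hq
      exact ⟨(0,0), by simp, hf0⟩
    · subst h3
      refine ⟨(n + q1, 0), ?_, hfd q1 h1⟩
      simp only [Set.mem_union, Set.mem_singleton_iff, Set.mem_setOf_eq]
      right
      refine ⟨by omega, by omega, by trivial⟩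
    · -- bin leaf (q1, q2), find group vertex
      have hBsum : q2 ≤ ∑ i ∈ (Finset.Icc 1 n).filter (fun i => g i = q1), a i := by
        rw [hfull q1 (Finset.mem_Icc.mpr ⟨h1, h2⟩)]; exact h4
      obtain ⟨i, hiT, hlt, hle⟩ := bp_prefix_cover a _ q2 h3 hBsum
      simp only [Finset.mem_filter, Finset.mem_Icc] at hiT
      obtain ⟨⟨hi1, hi2⟩, hgi⟩ := hiT
      have hofilter :
          ((Finset.Icc 1 n).filter (fun i' => g i' = q1)).filter (· < i) =
          (Finset.Icc 1 n).filter (fun i' => g i' = g i ∧ i' < i) := by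
        ext x
        simp only [Finset.mem_filter, Finset.mem_Icc, hgi]
        tauto
      rw [hofilter] at hlt hle
      refine ⟨(i, q2 - o i - 1), ?_, ?_⟩
      · simp only [Set.mem_union, Set.mem_singleton_iff, Set.mem_setOf_eq]
        left; right
        have hai := ha i (Finset.mem_Icc.mpr ⟨hi1, hi2⟩)
        have hoi : o i = ∑ i' ∈ (Finset.Icc 1 n).filter (fun i' => g i' = g i ∧ i' < i), a i' := rfl
        exact ⟨hi1, hi2, by show q2 - o i - 1 ≤ a i - 1; omega⟩
      · rw [hfg i (q2 - o i - 1) hi1 hi2, Prod.mk.injEq, hgi]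
        have : o i = ∑ i' ∈ (Finset.Icc 1 n).filter (fun i' => g i' = g i ∧ i' < i), a i' := rfl
        constructor
        · rfl
        · omega
  · -- cost
    have hsum1 : (∑ l ∈ Finset.Icc 1 (K + B),
        2 * B * K * uniformTwoStarDist (f (0, 0)) (f (n + l, 0)))
        = (K + B) * (2 * B * K) := by
      have hterm : ∀ l ∈ Finset.Icc 1 (K + B),
          2 * B * K * uniformTwoStarDist (f (0, 0)) (f (n + l, 0)) = 2 * B * K := by
        intro l hl
        have hl1 : 1 ≤ l := (Finset.mem_Icc.mp hl).1
        rw [hf0, hfd l hl1, bp_dist_root_first l hl1, mul_one]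
      rw [Finset.sum_congr rfl hterm, Finset.sum_const, Nat.card_Icc,
        Nat.add_sub_cancel, smul_eq_mul]
    have hsum2 : (∑ i ∈ Finset.Icc 1 n, ∑ j ∈ Finset.Icc 1 (a i - 1),
        uniformTwoStarDist (f (i, 0)) (f (i, j)))
        = 2 * ∑ i ∈ Finset.Icc 1 n, (a i - 1) := by
      rw [Finset.mul_sum]
      apply Finset.sum_congr rfl
      intro i hi
      obtain ⟨hi1, hi2⟩ := Finset.mem_Icc.mp hi
      have hgi := hga i hi1 hi2
      have hterm : ∀ j ∈ Finset.Icc 1 (a i - 1),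
          uniformTwoStarDist (f (i, 0)) (f (i, j)) = 2 := by
        intro j hj
        obtain ⟨hj1, hj2⟩ := Finset.mem_Icc.mp hj
        rw [hfg i 0 hi1 hi2, hfg i j hi1 hi2]
        exact bp_dist_leaf_leaf_same (g i) (o i + 0 + 1) (o i + j + 1)
          hgi.1 (by omega) (by omega) (by omega)
      rw [Finset.sum_congr rfl hterm, Finset.sum_const, Nat.card_Icc,
        Nat.add_sub_cancel, smul_eq_mul, Nat.mul_comm]
    rw [hsum1, hsum2]


/-- Correctness of the reduction of bin packing to wVNE of a 2-star
virtual network on a **uniform** 2-star physical network.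

Virtual network: root `r = (0,0)`; element groups: for `i ∈ 1..n` a star with center
`(i,0)` and leaves `(i,j)`, `j ∈ 1..aᵢ − 1`, internal edges of demand `1`, joined to
`r` by a demand-0 edge; and `K + B` dummy leaves `(n+ℓ, 0)` attached to `r` by edges
of demand `x = 2·B·K`.

Physical network: root `R = (0,0)`; `K` bin roots `(k,0)`, `k ∈ 1..K`, each with `B`
leaf children `(k,b)`, `b ∈ 1..B`; and `B` extra leaves `(K+ℓ, 0)`, `ℓ ∈ 1..B`,
adjacent to `R`; every edge of cost `1`.

With `θ = (K + B)·x + 2·∑ (aᵢ − 1)`, bin packing is solvable iff there is an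
embedding of cost at most `θ`. -/
theorem binPacking_iff_twoStar_on_uniformTwoStar_wVNE (n B K : ℕ) (hn : 2 ≤ n)
    (hB : 1 ≤ B) (hK : 2 ≤ K) (a : ℕ → ℕ) (ha : ∀ i ∈ Finset.Icc 1 n, 1 ≤ a i)
    (hsum : ∑ i ∈ Finset.Icc 1 n, a i = B * K) :
    (∃ g : ℕ → ℕ, (∀ i ∈ Finset.Icc 1 n, g i ∈ Finset.Icc 1 K) ∧
        ∀ k ∈ Finset.Icc 1 K,
          ∑ i ∈ (Finset.Icc 1 n).filter (fun i => g i = k), a i ≤ B) ↔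
    (∃ f : ℕ × ℕ → ℕ × ℕ,
      Set.BijOn f
        ({((0 : ℕ), (0 : ℕ))} ∪
          {p : ℕ × ℕ | 1 ≤ p.1 ∧ p.1 ≤ n ∧ p.2 ≤ a p.1 - 1} ∪
          {p : ℕ × ℕ | n + 1 ≤ p.1 ∧ p.1 ≤ n + K + B ∧ p.2 = 0})
        ({((0 : ℕ), (0 : ℕ))} ∪
          {p : ℕ × ℕ | 1 ≤ p.1 ∧ p.1 ≤ K + B ∧ p.2 = 0} ∪
          {p : ℕ × ℕ | 1 ≤ p.1 ∧ p.1 ≤ K ∧ 1 ≤ p.2 ∧ p.2 ≤ B}) ∧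
      (∑ l ∈ Finset.Icc 1 (K + B),
          2 * B * K * uniformTwoStarDist (f (0, 0)) (f (n + l, 0))) +
      (∑ i ∈ Finset.Icc 1 n, ∑ j ∈ Finset.Icc 1 (a i - 1),
          uniformTwoStarDist (f (i, 0)) (f (i, j)))
        ≤ (K + B) * (2 * B * K) + 2 * ∑ i ∈ Finset.Icc 1 n, (a i - 1)) := by
  constructor
  · rintro ⟨g, hg1, hg2⟩
    exact bp_forward n B K hn hB hK a ha hsum g hg1 hg2
  · rintro ⟨f, hbij, hcost⟩
    exact bp_backward n B K hn hB hK a ha hsum f hbij hcost
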